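/- Let T be a tree and M a submonoid of Emb(T). If the limit set L(M) has exactly two elements, then every non-elliptic element of M is hyperbolic. -/

import Mathlib

open SimpleGraph

variable {V : Type*}

/-- `g` is a self-embedding of `G`: injective and adjacency-preserving. -/
def IsEmb (G : SimpleGraph V) (g : V → V) : Prop :=
  Function.Injective g ∧ ∀ u v : V, G.Adj u v → G.Adj (g u) (g v)

/-- A ray in `G`: a one-way infinite path. -/
structure GRay (G : SimpleGraph V) where
  f : ℕ → V
  inj : Function.Injective f
  adj : ∀ n, G.Adj (f n) (f (n + 1))

/-- Two rays are equivalent (lie in the same end): for every vertex `v` they have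
tails avoiding `v` lying in the same component of `G − v`. -/
def RayEquiv (G : SimpleGraph V) (R S : GRay G) : Prop :=
  ∀ v : V, ∃ m n : ℕ, (∀ i, m ≤ i → R.f i ≠ v) ∧ (∀ j, n ≤ j → S.f j ≠ v) ∧
    ∃ w : G.Walk (R.f m) (S.f n), v ∉ w.support

/-- `g` fixes the end represented by the ray `R`: the image ray is equivalent to `R`. -/
def FixesEnd (G : SimpleGraph V) (g : V → V) (R : GRay G) : Prop :=
  ∃ S : GRay G, (∀ n, S.f n = g (R.f n)) ∧ RayEquiv G S R

def FixesVertex (g : V → V) : Prop := ∃ v, g v = v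

/-- `g` fixes an edge setwise (possibly swapping its endpoints). -/
def FixesEdge (G : SimpleGraph V) (g : V → V) : Prop :=
  ∃ u v : V, G.Adj u v ∧ ((g u = u ∧ g v = v) ∨ (g u = v ∧ g v = u))

/-- `g` fixes setwise a non-empty finite subtree of `G`. -/
def FixesFiniteSubtree (G : SimpleGraph V) (g : V → V) : Prop :=
  ∃ S : Set V, S.Nonempty ∧ S.Finite ∧ (G.induce S).Connected ∧ g '' S = S

/-- `R` is a ray with `g(R) ⊆ R`; for non-elliptic `g` its end is the direction `g⁺`. -/
def DirectionRay (G : SimpleGraph V) (g : V → V) (R : GRay G) : Prop :=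
  ∀ n, ∃ m, g (R.f n) = R.f m

/-- `w` lies in the component of `G − x` containing the end of `R`. -/
def InComp (G : SimpleGraph V) (x : V) (R : GRay G) (w : V) : Prop :=
  ∃ m, (∀ i, m ≤ i → R.f i ≠ x) ∧ ∃ p : G.Walk w (R.f m), x ∉ p.support

/-- A sequence of vertices converges to the end represented by `R`. -/
def ConvergesTo (G : SimpleGraph V) (x : ℕ → V) (R : GRay G) : Prop :=
  ∀ v : V, ∃ N : ℕ, ∀ n, N ≤ n → InComp G v R (x n)

/-- `M` is a submonoid of `Emb(G)`. -/
def IsEmbMonoid (G : SimpleGraph V) (M : Set (V → V)) : Prop :=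
  (∀ g ∈ M, IsEmb G g) ∧ (id ∈ M) ∧ ∀ g ∈ M, ∀ h ∈ M, (g ∘ h) ∈ M

/-- The end of `R` is an accumulation point of the orbit of `v0` under `M`:
every basic neighbourhood of the end of `R` meets the orbit. -/
def InLimitSet (G : SimpleGraph V) (M : Set (V → V)) (v0 : V) (R : GRay G) : Prop :=
  ∀ x : V, ∃ g ∈ M, InComp G x R (g v0)

/-- A self-embedding is elliptic if it fixes a vertex or an edge. -/
def Elliptic (G : SimpleGraph V) (g : V → V) : Prop := FixesVertex g ∨ FixesEdge G g

/-- `g` is hyperbolic: not elliptic and it fixes exactly two ends. -/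
def Hyperbolic (G : SimpleGraph V) (g : V → V) : Prop :=
  ¬ Elliptic G g ∧ ∃ R1 R2 : GRay G, ¬ RayEquiv G R1 R2 ∧
    FixesEnd G g R1 ∧ FixesEnd G g R2 ∧
    ∀ S : GRay G, FixesEnd G g S → RayEquiv G S R1 ∨ RayEquiv G S R2

/-- `g` is parabolic: not elliptic and it fixes exactly one end. -/
def Parabolic (G : SimpleGraph V) (g : V → V) : Prop :=
  ¬ Elliptic G g ∧ ∃ R : GRay G, FixesEnd G g R ∧
    ∀ S : GRay G, FixesEnd G g S → RayEquiv G S R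

section AuxLemmas

variable {G : SimpleGraph V} {g : V → V}

def mapW (hg : IsEmb G g) {a b : V} (w : G.Walk a b) : G.Walk (g a) (g b) :=
  w.map ⟨g, fun h => hg.2 _ _ h⟩

lemma mapW_length (hg : IsEmb G g) {a b : V} (w : G.Walk a b) :
    (mapW hg w).length = w.length := by simp [mapW]

lemma mapW_support (hg : IsEmb G g) {a b : V} (w : G.Walk a b) :
    (mapW hg w).support = w.support.map g := by
  simp [mapW]

lemma mapW_isPath (hg : IsEmb G g) {a b : V} {w : G.Walk a b} (hw : w.IsPath) :
    (mapW hg w).IsPath := Walk.map_isPath_of_injective hg.1 hw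

lemma mapW_getVert (hg : IsEmb G g) {a b : V} (w : G.Walk a b) (i : ℕ) :
    (mapW hg w).getVert i = g (w.getVert i) := by
  induction w generalizing i with
  | nil => simp [mapW, Walk.getVert]
  | cons h p ih => cases i with
    | zero => simp [mapW, Walk.getVert]
    | succ n => simpa [mapW, Walk.getVert] using ih n

lemma path_unique (hT : G.IsTree) {a b : V} {p q : G.Walk a b}
    (hp : p.IsPath) (hq : q.IsPath) : p = q := by
  obtain ⟨r, _, hu⟩ := hT.existsUnique_path a b
  rw [hu p hp, hu q hq]

lemma dist_eq_path_length (hT : G.IsTree) {a b : V} {p : G.Walk a b}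
    (hp : p.IsPath) : G.dist a b = p.length := by
  classical
  refine le_antisymm (dist_le p) ?_
  obtain ⟨w, hw⟩ := hT.isConnected.exists_walk_length_eq_dist a b
  have h1 := path_unique hT hp (Walk.bypass_isPath w)
  calc p.length = w.bypass.length := by rw [h1]
    _ ≤ w.length := w.length_bypass_le
    _ = G.dist a b := hw

/-- any walk between a,b contains the support of the unique path -/
lemma path_support_subset_walk (hT : G.IsTree) {a b : V} {p : G.Walk a b}
    (hp : p.IsPath) (w : G.Walk a b) : ∀ x ∈ p.support, x ∈ w.support := by
  classical
  intro x hx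
  have h1 := path_unique hT hp (Walk.bypass_isPath w)
  exact w.support_bypass_subset (h1 ▸ hx)

lemma ray_seg (R : GRay G) {a b : ℕ} (h : a ≤ b) :
    ∃ w : G.Walk (R.f a) (R.f b), w.IsPath ∧ w.length = b - a ∧
      ∀ x ∈ w.support, ∃ i, a ≤ i ∧ i ≤ b ∧ x = R.f i := by
  induction b, h using Nat.le_induction with
  | base =>
    refine ⟨Walk.nil, Walk.IsPath.nil, by simp, ?_⟩
    intro x hx
    simp only [Walk.support_nil, List.mem_singleton] at hx
    exact ⟨a, le_rfl, le_rfl, hx⟩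
  | succ b hab ih =>
    obtain ⟨w, hwp, hwl, hws⟩ := ih
    refine ⟨w.concat (R.adj b), ?_, ?_, ?_⟩
    · rw [Walk.concat_eq_append]
      rw [Walk.isPath_def, Walk.support_append]
      refine List.Nodup.append (Walk.isPath_def _ |>.mp hwp) (by simp) ?_
      intro x hx hx'
      simp only [Walk.support_cons, Walk.support_nil, List.tail_cons, List.mem_singleton] at hx'
      obtain ⟨i, hi1, hi2, rfl⟩ := hws x hx
      exact absurd (R.inj hx') (by omega)
    · rw [Walk.concat_eq_append]; simp [hwl]; omega
    · intro x hx
      rw [Walk.concat_eq_append, Walk.support_append] at hx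
      rcases List.mem_append.mp hx with hx | hx
      · obtain ⟨i, hi1, hi2, rfl⟩ := hws x hx
        exact ⟨i, hi1, by omega, rfl⟩
      · simp only [Walk.support_cons, Walk.support_nil, List.tail_cons, List.mem_singleton] at hx
        exact ⟨b + 1, by omega, le_rfl, hx⟩

/-- walk between two ray vertices, any order of indices -/
lemma ray_walk (R : GRay G) (a b : ℕ) :
    ∃ w : G.Walk (R.f a) (R.f b), ∀ x ∈ w.support, ∃ i, min a b ≤ i ∧ i ≤ max a b ∧ x = R.f i := by
  rcases le_total a b with h | h
  · obtain ⟨w, _, _, hs⟩ := ray_seg R h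
    exact ⟨w, fun x hx => by
      obtain ⟨i, h1, h2, h3⟩ := hs x hx; exact ⟨i, by omega, by omega, h3⟩⟩
  · obtain ⟨w, _, _, hs⟩ := ray_seg R h
    refine ⟨w.reverse, fun x hx => ?_⟩
    rw [Walk.support_reverse, List.mem_reverse] at hx
    obtain ⟨i, h1, h2, h3⟩ := hs x hx; exact ⟨i, by omega, by omega, h3⟩

lemma ray_tail_avoid (R : GRay G) (v : V) : ∃ m, ∀ i, m ≤ i → R.f i ≠ v := by
  classical
  by_cases h : ∃ i, R.f i = v
  · obtain ⟨i0, hi0⟩ := h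
    exact ⟨i0 + 1, fun i hi he => by
      have := R.inj (he.trans hi0.symm); omega⟩
  · exact ⟨0, fun i _ he => h ⟨i, he⟩⟩

lemma rayEquiv_refl (R : GRay G) : RayEquiv G R R := by
  intro v
  obtain ⟨m, hm⟩ := ray_tail_avoid R v
  refine ⟨m, m, hm, hm, Walk.nil, ?_⟩
  simp only [Walk.support_nil, List.mem_singleton]
  intro hv
  exact hm m le_rfl hv.symm

lemma rayEquiv_symm {R S : GRay G} (h : RayEquiv G R S) : RayEquiv G S R := by
  intro v
  obtain ⟨m, n, h1, h2, w, hw⟩ := h v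
  exact ⟨n, m, h2, h1, w.reverse, by rwa [Walk.support_reverse, List.mem_reverse]⟩

/-- strengthened elimination: thresholds can be raised -/
lemma rayEquiv_elim {R S : GRay G} (h : RayEquiv G R S) (v : V) (m0 n0 : ℕ) :
    ∃ m n : ℕ, m0 ≤ m ∧ n0 ≤ n ∧ (∀ i, m ≤ i → R.f i ≠ v) ∧ (∀ j, n ≤ j → S.f j ≠ v) ∧
      ∃ w : G.Walk (R.f m) (S.f n), v ∉ w.support := by
  obtain ⟨m, n, h1, h2, w, hw⟩ := h v
  obtain ⟨w1, hw1⟩ := ray_walk R (max m m0) m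
  obtain ⟨w2, hw2⟩ := ray_walk S n (max n n0)
  refine ⟨max m m0, max n n0, le_max_right _ _, le_max_right _ _,
    fun i hi => h1 i (le_trans (le_max_left _ _) hi),
    fun j hj => h2 j (le_trans (le_max_left _ _) hj),
    (w1.append w).append w2, ?_⟩
  intro hv
  rw [Walk.mem_support_append_iff, Walk.mem_support_append_iff] at hv
  rcases hv with (hv | hv) | hv
  · obtain ⟨i, h1', h2', h3⟩ := hw1 v hv
    exact h1 i (by omega) h3.symm
  · exact hw hv
  · obtain ⟨i, h1', h2', h3⟩ := hw2 v hv
    exact h2 i (by omega) h3.symm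

lemma rayEquiv_trans {R S Q : GRay G} (h1 : RayEquiv G R S) (h2 : RayEquiv G S Q) :
    RayEquiv G R Q := by
  intro v
  obtain ⟨m, n, hm, hn, w, hw⟩ := h1 v
  obtain ⟨n', k, hn1, hk1, hn', hk, w', hw'⟩ := rayEquiv_elim h2 v n 0
  obtain ⟨ws, hws⟩ := ray_walk S n n'
  refine ⟨m, k, hm, hk, (w.append ws).append w', ?_⟩
  intro hv
  rw [Walk.mem_support_append_iff, Walk.mem_support_append_iff] at hv
  rcases hv with (hv | hv) | hv
  · exact hw hv
  · obtain ⟨i, h1', h2', h3⟩ := hws v hv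
    exact hn i (by omega) h3.symm
  · exact hw' hv

/-- rays with a common (aligned) tail are equivalent -/
lemma rayEquiv_of_tail {R S : GRay G} {a b : ℕ} (h : ∀ i, R.f (a + i) = S.f (b + i)) :
    RayEquiv G R S := by
  intro v
  obtain ⟨m, hm⟩ := ray_tail_avoid R v
  obtain ⟨n, hn⟩ := ray_tail_avoid S v
  set i0 := max (max m a) (max n b) with hi0
  obtain ⟨w1, hw1⟩ := ray_walk R (max m a) (a + i0)
  obtain ⟨w2, hw2⟩ := ray_walk S (b + i0) (max n b)
  have hkey : R.f (a + i0) = S.f (b + i0) := h i0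
  refine ⟨max m a, max n b, fun i hi => hm i (by omega), fun j hj => hn j (by omega),
    w1.append (w2.copy hkey.symm rfl), ?_⟩
  intro hv
  rw [Walk.mem_support_append_iff] at hv
  rcases hv with hv | hv
  · obtain ⟨i, h1', _, h3⟩ := hw1 v hv
    exact hm i (by omega) h3.symm
  · rw [Walk.support_copy] at hv
    obtain ⟨i, h1', _, h3⟩ := hw2 v hv
    exact hn i (by omega) h3.symm

/-- separation from non-equivalence -/
lemma ray_separation {R S : GRay G} (h : ¬ RayEquiv G R S) :
    ∃ (x : V) (m0 n0 : ℕ), (∀ i, m0 ≤ i → R.f i ≠ x) ∧ (∀ j, n0 ≤ j → S.f j ≠ x) ∧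
      ∀ m n, m0 ≤ m → n0 ≤ n → ∀ w : G.Walk (R.f m) (S.f n), x ∈ w.support := by
  rw [RayEquiv] at h
  push_neg at h
  obtain ⟨x, hx⟩ := h
  obtain ⟨m0, hm0⟩ := ray_tail_avoid R x
  obtain ⟨n0, hn0⟩ := ray_tail_avoid S x
  refine ⟨x, m0, n0, hm0, hn0, fun m n hm hn w => ?_⟩
  exact hx m n (fun i hi => hm0 i (by omega)) (fun j hj => hn0 j (by omega)) w

/-- the image of a ray under an embedding -/
def gRay (hg : IsEmb G g) (R : GRay G) : GRay G where
  f := fun n => g (R.f n)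
  inj := fun _ _ h => R.inj (hg.1 h)
  adj := fun n => hg.2 _ _ (R.adj n)

lemma gRay_f (hg : IsEmb G g) (R : GRay G) (n : ℕ) : (gRay hg R).f n = g (R.f n) := rfl

/-- RayEquiv only depends on the functions -/
lemma rayEquiv_congr {R R' S S' : GRay G} (hR : R.f = R'.f) (hS : S.f = S'.f)
    (h : RayEquiv G R S) : RayEquiv G R' S' := by
  intro v
  obtain ⟨m, n, h1, h2, w, hw⟩ := h v
  exact ⟨m, n, hR ▸ h1, hS ▸ h2, by rw [← hR, ← hS]; exact ⟨w, hw⟩⟩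

/-- embeddings preserve end equivalence -/
lemma map_rayEquiv (hT : G.IsTree) (hg : IsEmb G g) {R S : GRay G} (h : RayEquiv G R S) :
    RayEquiv G (gRay hg R) (gRay hg S) := by
  intro v
  by_cases hv : ∃ u, g u = v
  · obtain ⟨u, rfl⟩ := hv
    obtain ⟨m, n, h1, h2, w, hw⟩ := h u
    refine ⟨m, n, fun i hi he => h1 i hi (hg.1 he), fun j hj he => h2 j hj (hg.1 he),
      mapW hg w, ?_⟩
    show _ ∉ (mapW hg w).support
    rw [mapW_support hg]
    intro hmem
    obtain ⟨y, hy, hy'⟩ := List.mem_map.mp hmem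
    exact hw (hg.1 hy' ▸ hy)
  · push_neg at hv
    obtain ⟨w⟩ := hT.isConnected (R.f 0) (S.f 0)
    refine ⟨0, 0, fun i _ he => hv _ he, fun j _ he => hv _ he, mapW hg w, ?_⟩
    show _ ∉ (mapW hg w).support
    rw [mapW_support hg]
    intro hmem
    obtain ⟨y, _, hy'⟩ := List.mem_map.mp hmem
    exact hv y hy'

/-- embeddings are injective on ends -/
lemma rayEquiv_of_map (hT : G.IsTree) (hg : IsEmb G g) {R S : GRay G}
    (h : RayEquiv G (gRay hg R) (gRay hg S)) : RayEquiv G R S := by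
  intro v
  obtain ⟨m, n, h1, h2, w, hw⟩ := h (g v)
  obtain ⟨p⟩ := hT.isConnected (R.f m) (S.f n)
  classical
  refine ⟨m, n, fun i hi he => h1 i hi (by rw [gRay_f, he]),
    fun j hj he => h2 j hj (by rw [gRay_f, he]), p.toPath, ?_⟩
  intro hv
  have hgv : g v ∈ (mapW hg (p.toPath : G.Walk (R.f m) (S.f n))).support := by
    rw [mapW_support hg]
    exact List.mem_map.mpr ⟨v, hv, rfl⟩
  exact hw (path_support_subset_walk hT (mapW_isPath hg (p.toPath).isPath) w _ hgv)

lemma walk_length_pos {a b : V} (p : G.Walk a b) (h : a ≠ b) : 1 ≤ p.length := by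
  by_contra hl
  have h0 : p.length = 0 := by omega
  exact h (Walk.eq_of_length_eq_zero h0)

lemma getVert_one_takeUntil {a b x : V} (q : G.Walk a b) (hx : x ∈ q.support) (hxa : x ≠ a)
    [DecidableEq V] : (q.takeUntil x hx).getVert 1 = q.getVert 1 := by
  have hlen : 1 ≤ (q.takeUntil x hx).length := walk_length_pos _ (fun h => hxa h.symm)
  conv_rhs => rw [← q.take_spec hx]
  rw [Walk.getVert_append]
  rcases lt_or_eq_of_le hlen with h1 | h1
  · rw [if_pos h1]
  · have h2 : (q.takeUntil x hx).getVert 1 = x := by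
      have := Walk.getVert_length (q.takeUntil x hx)
      rwa [← h1] at this
    rw [if_neg (by omega), h2, ← h1, Nat.sub_self, Walk.getVert_zero]

lemma getVert_pen_append {a x b : V} (s : G.Walk a x) (t : G.Walk x b) (h : 1 ≤ t.length) :
    (s.append t).getVert ((s.append t).length - 1) = t.getVert (t.length - 1) := by
  rw [Walk.length_append, Walk.getVert_append, if_neg (by omega)]
  congr 1
  omega

/-- KEY: in a tree, concatenating two paths without backtracking gives a path -/
lemma append_isPath_of_no_backtrack (hT : G.IsTree) {a b c : V} {p : G.Walk a b} {q : G.Walk b c}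
    (hp : p.IsPath) (hq : q.IsPath) (hpl : 1 ≤ p.length) (hql : 1 ≤ q.length)
    (hnb : p.getVert (p.length - 1) ≠ q.getVert 1) : (p.append q).IsPath := by
  classical
  have hinter : ∀ x, x ∈ p.support → x ∈ q.support → x = b := by
    intro x hxp hxq
    by_contra hxb
    have hxa : x ≠ b := hxb
    set P1 : G.Walk x b := p.dropUntil x hxp with hP1
    have hP1path : P1.IsPath := hp.dropUntil hxp
    set P2 : G.Walk x b := (q.takeUntil x hxq).reverse with hP2
    have hP2path : P2.IsPath := (hq.takeUntil hxq).reverse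
    have heq : P1 = P2 := path_unique hT hP1path hP2path
    have hg1 : P1.getVert (P1.length - 1) = p.getVert (p.length - 1) := by
      have hlen : 1 ≤ (p.dropUntil x hxp).length := walk_length_pos _ hxa
      have h := getVert_pen_append (p.takeUntil x hxp) (p.dropUntil x hxp) hlen
      rw [p.take_spec hxp] at h
      exact h.symm
    have hg2 : P2.getVert (P2.length - 1) = q.getVert 1 := by
      rw [hP2, Walk.getVert_reverse, Walk.length_reverse]
      have hlt : 1 ≤ (q.takeUntil x hxq).length := walk_length_pos _ (fun h => hxa h.symm)
      have harith : (q.takeUntil x hxq).length - ((q.takeUntil x hxq).length - 1) = 1 := by omega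
      rw [harith]
      exact getVert_one_takeUntil q hxq hxa
    rw [heq, hg2] at hg1
    exact hnb hg1.symm
  rw [Walk.isPath_def, Walk.support_append]
  refine List.Nodup.append hp.support_nodup ((List.tail_sublist _).nodup hq.support_nodup) ?_
  intro x hxp hxq
  have hxq' : x ∈ q.support := List.mem_of_mem_tail hxq
  have hxb : x = b := hinter x hxp hxq'
  subst hxb
  have hcons : q.support = x :: q.support.tail := q.support_eq_cons
  have hnodup := hq.support_nodup
  rw [hcons, List.nodup_cons] at hnodup
  exact hnodup.1 hxq

/-- two equivalent rays through a common vertex coincide beyond it -/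
lemma aligned_of_common (hT : G.IsTree) {R S : GRay G} (h : RayEquiv G R S)
    {i0 j0 : ℕ} (hc : R.f i0 = S.f j0) : ∀ k, R.f (i0 + k) = S.f (j0 + k) := by
  classical
  intro k
  induction k with
  | zero => simpa using hc
  | succ k ih =>
    by_contra hne
    have hne' : R.f (i0 + k + 1) ≠ S.f (j0 + k + 1) := by
      intro he
      rw [show i0 + k + 1 = i0 + (k+1) from rfl, show j0 + k + 1 = j0 + (k+1) from rfl] at he
      exact hne he
    clear hne
    set u : V := R.f (i0 + k) with hu
    have ihu : u = S.f (j0 + k) := ih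
    obtain ⟨m, n, hm, hn, htR, htS, w, hw⟩ := rayEquiv_elim h u (i0 + k + 1) (j0 + k + 1)
    -- walk avoiding u from R.f (i0+k+1) to S.f (j0+k+1)
    obtain ⟨w1, hw1⟩ := ray_walk R (i0 + k + 1) m
    obtain ⟨w2, hw2⟩ := ray_walk S n (j0 + k + 1)
    set W : G.Walk (R.f (i0 + k + 1)) (S.f (j0 + k + 1)) := (w1.append w).append w2 with hW
    have hWav : u ∉ W.support := by
      intro hv
      rw [hW, Walk.mem_support_append_iff, Walk.mem_support_append_iff] at hv
      rcases hv with (hv | hv) | hv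
      · obtain ⟨i, h1, h2, h3⟩ := hw1 u hv
        have : R.f i = R.f (i0 + k) := h3.symm
        have := R.inj this
        omega
      · exact hw hv
      · obtain ⟨i, h1, h2, h3⟩ := hw2 u hv
        have h4 : S.f i = S.f (j0 + k) := h3.symm.trans ihu
        have := S.inj h4
        omega
    -- the 2-step walk through u
    have hadj1 : G.Adj (R.f (i0 + k + 1)) u := (R.adj (i0 + k)).symm
    have hadj2 : G.Adj u (S.f (j0 + k + 1)) := by
      rw [ihu]
      exact S.adj (j0 + k)
    set w2' : G.Walk (R.f (i0 + k + 1)) (S.f (j0 + k + 1)) :=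
      Walk.cons hadj1 (Walk.cons hadj2 Walk.nil) with hw2'
    have hw2'path : w2'.IsPath := by
      rw [hw2', Walk.isPath_def]
      simp only [Walk.support_cons, Walk.support_nil, List.nodup_cons, List.mem_cons,
        List.mem_singleton, List.not_mem_nil, not_false_iff, List.nodup_nil, and_true]
      refine ⟨?_, ?_⟩
      · rintro (h1 | h1 | h1)
        · exact absurd (R.inj (h1 : R.f (i0+k+1) = R.f (i0+k))) (by omega)
        · exact hne' h1
        · exact h1
      · rintro (h1 | h1)
        · rw [ihu] at h1
          exact absurd (S.inj h1) (by omega)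
        · exact h1
    have hueq : u ∈ w2'.support := by
      rw [hw2']
      simp [Walk.support_cons]
    have heq : w2' = ↑W.toPath := path_unique hT hw2'path (W.toPath).isPath
    rw [heq] at hueq
    exact hWav (Walk.support_toPath_subset W hueq)

/-- equivalent rays meet -/
lemma common_of_rayEquiv (hT : G.IsTree) {R S : GRay G} (h : RayEquiv G R S) :
    ∃ i j, R.f i = S.f j := by
  by_contra hdis
  push_neg at hdis
  classical
  set DS : Set ℕ := {d | ∃ i j, G.dist (R.f i) (S.f j) = d} with hDS
  have hne : DS.Nonempty := ⟨_, 0, 0, rfl⟩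
  set c : ℕ := sInf DS with hc
  obtain ⟨i, j, hij⟩ : ∃ i j, G.dist (R.f i) (S.f j) = c := Nat.sInf_mem hne
  have hcmin : ∀ i' j', c ≤ G.dist (R.f i') (S.f j') := fun i' j' => Nat.sInf_le ⟨i', j', rfl⟩
  have hc1 : 1 ≤ c := by
    rcases Nat.eq_zero_or_pos c with h0 | h0
    · rw [h0] at hij
      rcases (dist_eq_zero_iff_eq_or_not_reachable).mp hij with he | hre
      · exact absurd he (hdis i j)
      · exact absurd (hT.isConnected (R.f i) (S.f j)) hre
    · exact h0
  -- the unique path from R.f i to S.f j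
  obtain ⟨p0⟩ := hT.isConnected (R.f i) (S.f j)
  set p : G.Walk (R.f i) (S.f j) := ↑p0.toPath with hp
  have hppath : p.IsPath := (p0.toPath).isPath
  have hplen : p.length = c := by rw [← hij, dist_eq_path_length hT hppath]
  rcases eq_or_lt_of_le hc1 with hc2 | hc2
  · -- c = 1 : R.f i adjacent to S.f j
    have hadj : G.Adj (R.f i) (S.f j) := by
      have h1 := p.adj_getVert_succ (by omega : 0 < p.length)
      rw [Walk.getVert_zero] at h1
      have h2 : p.getVert 1 = S.f j := by
        have := p.getVert_length
        rwa [hplen, ← hc2] at this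
      rwa [h2] at h1
    obtain ⟨m, n, hm, hn, htR, htS, w, hw⟩ := rayEquiv_elim h (S.f j) i (j + 1)
    -- path A' : R.f i → S.f j → S.f n
    obtain ⟨segS, hsegSp, _, hsegSs⟩ := ray_seg S (by omega : j ≤ n)
    set A : G.Walk (R.f i) (S.f n) := Walk.cons hadj segS with hA
    have hApath : A.IsPath := by
      rw [hA, Walk.cons_isPath_iff]
      refine ⟨hsegSp, fun hmem => ?_⟩
      obtain ⟨i', _, _, h3⟩ := hsegSs _ hmem
      exact hdis i i' h3
    -- walk B : R.f i → R.f m → S.f n avoiding S.f j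
    obtain ⟨segR, hsegR⟩ := ray_walk R i m
    set B : G.Walk (R.f i) (S.f n) := segR.append w with hB
    have hBav : S.f j ∉ B.support := by
      intro hv
      rw [hB, Walk.mem_support_append_iff] at hv
      rcases hv with hv | hv
      · obtain ⟨i', _, _, h3⟩ := hsegR _ hv
        exact hdis i' j h3.symm
      · exact hw hv
    have heq : A = (B.toPath : G.Walk _ _) := path_unique hT hApath (B.toPath).isPath
    have hmem : S.f j ∈ A.support := by
      rw [hA, Walk.support_cons]
      exact List.mem_cons_of_mem _ segS.start_mem_support
    rw [heq] at hmem
    exact hBav (Walk.support_toPath_subset B hmem)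
  · -- c ≥ 2 : consider the second vertex y of p
    set y : V := p.getVert 1 with hy
    have hyR : ∀ i', R.f i' ≠ y := by
      intro i' he
      -- dist y (S.f j) = c - 1 < c contradicts minimality
      have h1 : G.dist y (S.f j) ≤ c - 1 := by
        classical
        have hymem : y ∈ p.support := Walk.mem_support_iff_exists_getVert.mpr ⟨1, rfl, by omega⟩
        have hdrop : (p.dropUntil y hymem).IsPath := hppath.dropUntil hymem
        have hlen : (p.takeUntil y hymem).length + (p.dropUntil y hymem).length = p.length := by
          have := congrArg Walk.length (p.take_spec hymem)
          rwa [Walk.length_append] at this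
        have htake : 1 ≤ (p.takeUntil y hymem).length := by
          by_contra hl
          have h0 : (p.takeUntil y hymem).length = 0 := by omega
          have := Walk.eq_of_length_eq_zero (p := p.takeUntil y hymem) h0
          have h2 : p.getVert 1 ≠ R.f i := by
            intro he2
            have hp1 : (1:ℕ) ≤ p.length := by omega
            have := hppath
            rw [Walk.isPath_def] at this
            -- getVert 1 = getVert 0 on a path of length ≥ 1 is impossible
            have h3 := p.adj_getVert_succ (by omega : 0 < p.length)
            rw [Walk.getVert_zero, he2] at h3
            exact G.loopless.irrefl _ h3
          exact h2 this.symm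
        have := dist_eq_path_length hT hdrop
        omega
      have h2 := hcmin i' j
      rw [he] at h2
      omega
    have hyS : ∀ j', S.f j' ≠ y := by
      intro j' he
      have h1 : G.dist (R.f i) y ≤ 1 := by
        have hadj : G.Adj (R.f i) y := by
          have h1 := p.adj_getVert_succ (by omega : 0 < p.length)
          rwa [Walk.getVert_zero] at h1
        calc G.dist (R.f i) y ≤ (Walk.cons hadj Walk.nil).length := dist_le _
          _ = 1 := by simp
      have h2 := hcmin i j'
      rw [he] at h2
      omega
    obtain ⟨m, n, hm, hn, htR, htS, w, hw⟩ := rayEquiv_elim h y i j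
    obtain ⟨segR, hsegR⟩ := ray_walk R i m
    obtain ⟨segS, hsegS⟩ := ray_walk S n j
    set W : G.Walk (R.f i) (S.f j) := (segR.append w).append segS with hW
    have hWav : y ∉ W.support := by
      intro hv
      rw [hW, Walk.mem_support_append_iff, Walk.mem_support_append_iff] at hv
      rcases hv with (hv | hv) | hv
      · obtain ⟨i', _, _, h3⟩ := hsegR _ hv
        exact hyR i' h3.symm
      · exact hw hv
      · obtain ⟨j', _, _, h3⟩ := hsegS _ hv
        exact hyS j' h3.symm
    have heq : p = (W.toPath : G.Walk _ _) := path_unique hT hppath (W.toPath).isPath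
    have hymem : y ∈ p.support := Walk.mem_support_iff_exists_getVert.mpr ⟨1, rfl, by omega⟩
    rw [heq] at hymem
    exact hWav (Walk.support_toPath_subset W hymem)

/-- equivalent rays share an aligned tail -/
lemma tails_aligned (hT : G.IsTree) {R S : GRay G} (h : RayEquiv G R S) :
    ∃ a b, ∀ k, R.f (a + k) = S.f (b + k) := by
  obtain ⟨i, j, hij⟩ := common_of_rayEquiv hT h
  exact ⟨i, j, aligned_of_common hT h hij⟩

lemma path_getVert_inj {a b : V} {p : G.Walk a b} (hp : p.IsPath) :
    ∀ i j, i ≤ p.length → j ≤ p.length → p.getVert i = p.getVert j → i = j := by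
  induction p with
  | nil => intro i j hi hj _; simp only [Walk.length_nil, Nat.le_zero] at hi hj; omega
  | cons h q ih =>
    intro i j hi hj hij
    rw [Walk.cons_isPath_iff] at hp
    match i, j with
    | 0, 0 => rfl
    | 0, (j+1) =>
      rw [Walk.getVert_zero, Walk.getVert_cons_succ] at hij
      exact absurd (Walk.mem_support_iff_exists_getVert.mpr
        ⟨j, hij.symm, by simpa using hj⟩) hp.2
    | (i+1), 0 =>
      rw [Walk.getVert_zero, Walk.getVert_cons_succ] at hij
      exact absurd (Walk.mem_support_iff_exists_getVert.mpr
        ⟨i, hij, by simpa using hi⟩) hp.2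
    | (i+1), (j+1) =>
      rw [Walk.getVert_cons_succ, Walk.getVert_cons_succ] at hij
      have := ih hp.1 i j (by simpa using hi) (by simpa using hj) hij
      omega

/-- for a non-elliptic embedding there is a vertex whose displacement path does not backtrack -/
lemma exists_no_backtrack (hT : G.IsTree) (hg : IsEmb G g) (hne : ¬ Elliptic G g) :
    ∃ (v : V) (p : G.Walk v (g v)), p.IsPath ∧ 1 ≤ p.length ∧
      g (p.getVert 1) ≠ p.getVert (p.length - 1) := by
  classical
  by_contra hall
  push_neg at hall
  -- strong induction on displacement
  obtain ⟨v0⟩ := hT.isConnected.nonempty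
  have main : ∀ n : ℕ, ∀ v : V, G.dist v (g v) = n → False := by
    intro n
    induction n using Nat.strong_induction_on with
    | _ n IH =>
      intro v hv
      have hvgv : v ≠ g v := by
        intro he
        exact hne (Or.inl ⟨v, he.symm⟩)
      obtain ⟨p0⟩ := hT.isConnected v (g v)
      set p : G.Walk v (g v) := ↑p0.toPath with hp
      have hppath : p.IsPath := (p0.toPath).isPath
      have hplen : p.length = n := by rw [← hv, dist_eq_path_length hT hppath]
      have hpl1 : 1 ≤ p.length := walk_length_pos p hvgv
      have hbt := hall v p hppath hpl1
      rcases eq_or_lt_of_le hpl1 with h1 | h2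
      · -- length 1 : g swaps the edge v (g v)
        have hgv1 : p.getVert 1 = g v := by
          have := p.getVert_length; rwa [← h1] at this
        have hg2 : g (g v) = v := by
          have := hbt
          rw [hgv1, ← h1, Nat.sub_self, Walk.getVert_zero] at this
          exact this
        have hadj : G.Adj v (g v) := by
          have := p.adj_getVert_succ (by omega : 0 < p.length)
          rwa [Walk.getVert_zero, hgv1] at this
        exact hne (Or.inr ⟨v, g v, hadj, Or.inr ⟨rfl, hg2⟩⟩)
      · -- length ≥ 2 : move to the second vertex
        set v1 : V := p.getVert 1 with hv1
        have hv1adj : G.Adj v v1 := by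
          have := p.adj_getVert_succ (by omega : 0 < p.length)
          rwa [Walk.getVert_zero] at this
        have hv1v : v1 ≠ v := fun he => G.loopless.irrefl v (he ▸ hv1adj)
        have hv1mem : v1 ∈ p.support := Walk.mem_support_iff_exists_getVert.mpr ⟨1, rfl, by omega⟩
        set dp : G.Walk v1 (g v) := p.dropUntil v1 hv1mem with hdp
        have hdppath : dp.IsPath := hppath.dropUntil hv1mem
        have htlen : (p.takeUntil v1 hv1mem).length + dp.length = p.length := by
          have := congrArg Walk.length (p.take_spec hv1mem)
          rwa [Walk.length_append] at this
        have htake1 : (p.takeUntil v1 hv1mem).length = 1 := by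
          have h1 : 1 ≤ (p.takeUntil v1 hv1mem).length :=
            walk_length_pos _ (fun he => hv1v he.symm)
          -- takeUntil is a path from v to v1 ; since v1 = getVert 1 it must be the edge
          have h2 : G.dist v v1 = (p.takeUntil v1 hv1mem).length :=
            dist_eq_path_length hT (hppath.takeUntil hv1mem)
          have h3 : G.dist v v1 ≤ 1 := by
            calc G.dist v v1 ≤ (Walk.cons hv1adj Walk.nil).length := dist_le _
              _ = 1 := by simp
          omega
        have hdplen : dp.length = p.length - 1 := by omega
        -- g v1 = getVert (p.length - 1) lies on dp
        have hgv1mem : g v1 ∈ dp.support := by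
          have h4 : p.getVert (p.length - 1) ∈ dp.support := by
            have h5 : p.getVert (p.length - 1) = dp.getVert (p.length - 2) := by
              have h5' := Walk.getVert_append (p.takeUntil v1 hv1mem) dp (p.length - 1)
              rw [p.take_spec hv1mem, htake1, if_neg (by omega)] at h5'
              rw [h5']
              congr 1
            rw [h5]
            exact Walk.mem_support_iff_exists_getVert.mpr ⟨p.length - 2, rfl, by omega⟩
          rwa [← hbt] at h4
        have hgv1gv : g v1 ≠ g v := fun he => hv1v (hg.1 he)
        -- dist v1 (g v1) ≤ p.length - 2
        have hsplit : (dp.takeUntil (g v1) hgv1mem).length + (dp.dropUntil (g v1) hgv1mem).length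
            = dp.length := by
          have := congrArg Walk.length (dp.take_spec hgv1mem)
          rwa [Walk.length_append] at this
        have hd1 : 1 ≤ (dp.dropUntil (g v1) hgv1mem).length := walk_length_pos _ hgv1gv
        have hdist : G.dist v1 (g v1) ≤ p.length - 2 := by
          have h6 : G.dist v1 (g v1) = (dp.takeUntil (g v1) hgv1mem).length :=
            dist_eq_path_length hT (hdppath.takeUntil hgv1mem)
          omega
        exact IH (G.dist v1 (g v1)) (by omega) v1 rfl
  exact main (G.dist v0 (g v0)) v0 rfl

section DirW
variable (hg : IsEmb G g) {v : V} (p : G.Walk v (g v))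

/-- iterated translate walks -/
def dirW (hg : IsEmb G g) {v : V} (p : G.Walk v (g v)) : ∀ k : ℕ, G.Walk v (g^[k] v)
  | 0 => Walk.nil.copy rfl (by simp)
  | (k+1) => p.append ((mapW hg (dirW hg p k)).copy rfl (Function.iterate_succ_apply' g k v).symm)

variable (hg : IsEmb G g) {v : V} (p : G.Walk v (g v))

lemma dirW_length : ∀ k, (dirW hg p k).length = k * p.length
  | 0 => by simp [dirW]
  | (k+1) => by
    simp only [dirW, Walk.length_append, Walk.length_copy, mapW_length hg,
      dirW_length k]
    ring

lemma dirW_getVert_succ (k i : ℕ) :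
    (dirW hg p (k+1)).getVert i =
      if i < p.length then p.getVert i else g ((dirW hg p k).getVert (i - p.length)) := by
  simp only [dirW, Walk.getVert_append, Walk.getVert_copy, mapW_getVert hg]

lemma dirW_stable : ∀ k i, i ≤ k * p.length →
    (dirW hg p (k+1)).getVert i = (dirW hg p k).getVert i
  | 0, i, hi => by
    have : i = 0 := by simpa using hi
    subst this
    rw [Walk.getVert_zero, Walk.getVert_zero]
  | (k+1), i, hi => by
    rw [dirW_getVert_succ hg p (k+1) i, dirW_getVert_succ hg p k i]
    by_cases h : i < p.length
    · rw [if_pos h, if_pos h]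
    · rw [if_neg h, if_neg h]
      congr 1
      refine dirW_stable k (i - p.length) ?_
      have hmul : (k+1) * p.length = k * p.length + p.length := by ring
      omega

lemma dirW_stable' : ∀ k k' i, k ≤ k' → i ≤ k * p.length →
    (dirW hg p k').getVert i = (dirW hg p k).getVert i := by
  intro k k' i hk hi
  induction k', hk using Nat.le_induction with
  | base => rfl
  | succ k' hk ih =>
    rw [← ih]
    refine dirW_stable hg p k' i (hi.trans ?_)
    exact Nat.mul_le_mul_right _ hk

lemma dirW_getVert_one (hn : 1 ≤ p.length) : ∀ k, (dirW hg p (k+1)).getVert 1 = p.getVert 1 := by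
  intro k
  rw [dirW_getVert_succ]
  rcases eq_or_lt_of_le hn with h1 | h1
  · have hpl : p.length = 1 := h1.symm
    rw [if_neg (by omega), hpl, Nat.sub_self, Walk.getVert_zero]
    have h2 := Walk.getVert_length p
    rw [hpl] at h2
    exact h2.symm
  · rw [if_pos h1]

lemma dirW_isPath (hT : G.IsTree) (hp : p.IsPath) (hn : 1 ≤ p.length)
    (hnb : g (p.getVert 1) ≠ p.getVert (p.length - 1)) :
    ∀ k, (dirW hg p k).IsPath
  | 0 => by simp [dirW]
  | 1 => by
    rw [Walk.isPath_def]
    have hsup : (dirW hg p 1).support = p.support := by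
      have h0 : (mapW hg (dirW hg p 0)).support.tail = [] := by
        have h1 : (mapW hg (dirW hg p 0)).support.length = 1 := by
          rw [Walk.length_support, mapW_length hg]
          simp [dirW]
        cases h2 : (mapW hg (dirW hg p 0)).support with
        | nil => simp
        | cons a l =>
          rw [h2] at h1
          simp only [List.length_cons] at h1
          simp [List.eq_nil_of_length_eq_zero (by omega : l.length = 0)]
      simp only [dirW] at h0 ⊢
      rw [Walk.support_append, Walk.support_copy, h0, List.append_nil]
    rw [hsup]
    exact hp.support_nodup
  | (k+2) => by
    have hq : ((mapW hg (dirW hg p (k+1))).copy rfl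
        (Function.iterate_succ_apply' g (k+1) v).symm).IsPath := by
      rw [Walk.isPath_copy]
      exact mapW_isPath hg (dirW_isPath hT hp hn hnb (k+1))
    refine append_isPath_of_no_backtrack hT hp hq hn ?_ ?_
    · rw [Walk.length_copy, mapW_length hg, dirW_length]
      have := Nat.mul_pos (by omega : 0 < k + 1) (by omega : 0 < p.length)
      omega
    · rw [Walk.getVert_copy, mapW_getVert hg, dirW_getVert_one hg p hn k]
      exact fun h => hnb h.symm

/-- the direction ray of a non-elliptic self-embedding -/
lemma exists_direction (hT : G.IsTree) (hg : IsEmb G g) (hne : ¬ Elliptic G g) :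
    ∃ (D : GRay G) (n : ℕ), 0 < n ∧ ∀ i, g (D.f i) = D.f (i + n) := by
  obtain ⟨v, p, hp, hn, hnb⟩ := exists_no_backtrack hT hg hne
  have hpaths := dirW_isPath hg p hT hp hn hnb
  have hle : ∀ i : ℕ, i ≤ (i+1) * p.length := by
    intro i
    calc i ≤ i + 1 := by omega
    _ = (i+1) * 1 := by ring
    _ ≤ (i+1) * p.length := Nat.mul_le_mul_left _ hn
  set Df : ℕ → V := fun i => (dirW hg p (i+1)).getVert i with hDf
  have hstab : ∀ i k, i + 1 ≤ k → Df i = (dirW hg p k).getVert i := by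
    intro i k hk
    exact (dirW_stable' hg p (i+1) k i hk (hle i)).symm
  have hinj : Function.Injective Df := by
    have key : ∀ i j, i ≤ j → Df i = Df j → i = j := by
      intro i j hij he
      rw [hstab i (j+1) (by omega)] at he
      refine path_getVert_inj (hpaths (j+1)) i j ?_ ?_ he
      · rw [dirW_length]; exact hij.trans (hle j)
      · rw [dirW_length]; exact hle j
    intro i j he
    rcases le_total i j with h | h
    · exact key i j h he
    · exact (key j i h he.symm).symm
  have hadj : ∀ i, G.Adj (Df i) (Df (i+1)) := by
    intro i
    rw [hstab i (i+2) (by omega), hstab (i+1) (i+2) (by omega)]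
    refine (dirW hg p (i+2)).adj_getVert_succ ?_
    rw [dirW_length]
    have := hle (i+1)
    have h22 : (i+1+1) * p.length = (i+2) * p.length := by ring
    omega
  refine ⟨⟨Df, hinj, hadj⟩, p.length, hn, ?_⟩
  intro i
  show g (Df i) = Df (i + p.length)
  have h1 : (dirW hg p (i+2)).getVert (p.length + i) = g ((dirW hg p (i+1)).getVert i) := by
    have h1' := dirW_getVert_succ hg p (i+1) (p.length + i)
    rw [if_neg (by omega), show p.length + i - p.length = i from by omega] at h1'
    exact h1'
  have h2 : Df (i + p.length) = (dirW hg p (i+2)).getVert (i + p.length) := by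
    have := dirW_stable' hg p (i+2) (i + p.length + 1) (i + p.length) (by omega)
      (by
        have hmul : (i+2) * p.length = i * p.length + 2 * p.length := by ring
        have hi : i ≤ i * p.length := Nat.le_mul_of_pos_right _ hn
        omega)
    exact this
  rw [h2, show i + p.length = p.length + i from by omega, h1]

end DirW

lemma ray_dist (hT : G.IsTree) (R : GRay G) {a b : ℕ} (h : a ≤ b) :
    G.dist (R.f a) (R.f b) = b - a := by
  obtain ⟨w, hwp, hwl, _⟩ := ray_seg R h
  rw [dist_eq_path_length hT hwp, hwl]

lemma iterate_emb (hg : IsEmb G g) : ∀ k, IsEmb G (g^[k])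
  | 0 => ⟨fun _ _ h => h, fun _ _ h => h⟩
  | (k+1) => by
    have ih := iterate_emb hg k
    refine ⟨?_, ?_⟩
    · rw [Function.iterate_succ']
      exact hg.1.comp ih.1
    · intro u v h
      rw [Function.iterate_succ_apply', Function.iterate_succ_apply']
      exact hg.2 _ _ (ih.2 _ _ h)

lemma iterate_mem {M : Set (V → V)} (hM : IsEmbMonoid G M) (hgM : g ∈ M) :
    ∀ k, g^[k] ∈ M
  | 0 => by rw [Function.iterate_zero]; exact hM.2.1
  | (k+1) => by
    rw [Function.iterate_succ']
    exact hM.2.2 g hgM _ (iterate_mem hM hgM k)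

lemma iterate_shift {D : GRay G} {n : ℕ} (hshift : ∀ i, g (D.f i) = D.f (i + n)) :
    ∀ k i, g^[k] (D.f i) = D.f (i + k * n)
  | 0, i => by simp
  | (k+1), i => by
    rw [Function.iterate_succ_apply', iterate_shift hshift k i, hshift]
    congr 1
    ring

/-- all orbits converge to the direction end -/
lemma orbit_converges (hT : G.IsTree) (hg : IsEmb G g) (D : GRay G) (n : ℕ) (hn : 0 < n)
    (hshift : ∀ i, g (D.f i) = D.f (i + n)) (w y : V) :
    ∃ K, ∀ k, K ≤ k → InComp G y D (g^[k] w) := by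
  classical
  obtain ⟨P0⟩ := hT.isConnected w (D.f 0)
  set P : G.Walk w (D.f 0) := P0 with hP
  set L := P.length with hL
  set c := G.dist (D.f 0) y with hc
  obtain ⟨m0, hm0⟩ := ray_tail_avoid D y
  refine ⟨L + c + m0 + 1, fun k hk => ?_⟩
  have hkn : m0 ≤ k * n ∧ L + c < k * n := by
    have h1 : k ≤ k * n := Nat.le_mul_of_pos_right _ hn
    omega
  refine ⟨k * n, fun i hi => hm0 i (by omega), ?_⟩
  have hW0 : g^[k] (D.f 0) = D.f (k * n) := by
    have := iterate_shift hshift k 0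
    simpa using this
  set W : G.Walk (g^[k] w) (D.f (k * n)) := (mapW (iterate_emb hg k) P).copy rfl hW0 with hW
  refine ⟨W, fun hy => ?_⟩
  have hd1 : G.dist y (D.f (k * n)) ≤ L := by
    have := dist_le (W.dropUntil y hy)
    have h2 : (W.dropUntil y hy).length ≤ W.length := W.length_dropUntil_le hy
    have h3 : W.length = L := by
      rw [hW, Walk.length_copy, mapW_length (iterate_emb hg k)]
    omega
  have hd2 : G.dist (D.f 0) (D.f (k * n)) = k * n := by
    simpa using ray_dist hT D (Nat.zero_le (k * n))
  have htri := hT.isConnected.dist_triangle (u := D.f 0) (v := y) (w := D.f (k * n))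
  omega

/-- the backward shift along a fixed end not equivalent to the direction -/
lemma backward_shift (hT : G.IsTree) (hg : IsEmb G g) (hne : ¬ Elliptic G g)
    (D : GRay G) (n : ℕ) (hn : 0 < n) (hshift : ∀ i, g (D.f i) = D.f (i + n))
    {S : GRay G} (hgS : RayEquiv G (gRay hg S) S) (hSD : ¬ RayEquiv G S D) :
    ∃ a q, 0 < q ∧ ∀ i, g (S.f (a + q + i)) = S.f (a + i) := by
  obtain ⟨a, b, hab⟩ := tails_aligned hT hgS
  have hab' : ∀ k, g (S.f (a + k)) = S.f (b + k) := hab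
  rcases lt_trichotomy a b with h | h | h
  · -- b > a : the tail is pushed away from the start, contradicting convergence to D
    exfalso
    set d := b - a with hd
    have hd1 : 0 < d := by omega
    have hpush : ∀ k, g^[k] (S.f a) = S.f (a + k * d) := by
      intro k
      induction k with
      | zero => simp
      | succ k ih =>
        rw [Function.iterate_succ_apply', ih]
        have h2 := hab' (k * d)
        rw [h2]
        have hmul : (k+1) * d = k * d + d := by ring
        congr 1
        omega
    obtain ⟨x, m0, n0, hxm, hxn, hsep⟩ := ray_separation hSD
    obtain ⟨K, hK⟩ := orbit_converges hT hg D n hn hshift (S.f a) x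
    set k := K + m0 + 1 with hkdef
    obtain ⟨m, hmt, W0, hWx0⟩ := hK k (by omega)
    set W : G.Walk (S.f (a + k * d)) (D.f m) := W0.copy (hpush k) rfl with hWdef
    have hWx : x ∉ W.support := by rwa [hWdef, Walk.support_copy]
    -- extend W to reach index ≥ n0 on D
    obtain ⟨seg, hsegp, _, hsegs⟩ := ray_seg D (le_max_left m n0)
    have hx2 : x ∉ (W.append seg).support := by
      rw [Walk.mem_support_append_iff]
      rintro (hx | hx)
      · exact hWx hx
      · obtain ⟨i, hi1, _, hi3⟩ := hsegs x hx
        exact hmt i hi1 hi3.symm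
    exact hx2 (hsep (a + k * d) (max m n0) (by
        have : k ≤ k * d := Nat.le_mul_of_pos_right _ hd1
        omega) (le_max_right _ _) (W.append seg))
  · -- a = b : fixed vertex
    exfalso
    refine hne (Or.inl ⟨S.f a, ?_⟩)
    have := hab' 0
    rw [h] at this ⊢
    simpa using this
  · -- a > b : backward shift
    refine ⟨b, a - b, by omega, fun i => ?_⟩
    have := hab' i
    rw [show b + (a - b) + i = a + i from by omega]
    exact this

lemma backward_iter {S : GRay G} {a q : ℕ}
    (h : ∀ i, g (S.f (a + q + i)) = S.f (a + i)) :
    ∀ k, g^[k] (S.f (a + k * q)) = S.f a := by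
  have key : ∀ k i, g^[k] (S.f (a + k * q + i)) = S.f (a + i) := by
    intro k
    induction k with
    | zero => intro i; simp
    | succ k ih =>
      intro i
      rw [Function.iterate_succ_apply]
      have h1 : a + (k+1) * q + i = a + q + (k * q + i) := by ring
      rw [h1, h, show a + (k * q + i) = a + k * q + i from by omega]
      exact ih i
  intro k
  simpa using key k 0

/-- two fixed ends not equivalent to the direction end are equivalent -/
lemma backward_unique (hT : G.IsTree) (hg : IsEmb G g) (hne : ¬ Elliptic G g)
    (D : GRay G) (n : ℕ) (hn : 0 < n) (hshift : ∀ i, g (D.f i) = D.f (i + n))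
    {S S' : GRay G} (hgS : RayEquiv G (gRay hg S) S) (hgS' : RayEquiv G (gRay hg S') S')
    (hSD : ¬ RayEquiv G S D) (hS'D : ¬ RayEquiv G S' D) : RayEquiv G S S' := by
  classical
  by_contra hSS'
  obtain ⟨z, m0, n0, hzm, hzn, hsep⟩ := ray_separation hSS'
  obtain ⟨a, q, hq, hrel⟩ := backward_shift hT hg hne D n hn hshift hgS hSD
  obtain ⟨a', q', hq', hrel'⟩ := backward_shift hT hg hne D n hn hshift hgS' hS'D
  set A := max a m0 with hA
  set A' := max a' n0 with hA'
  have hrelA : ∀ i, g (S.f (A + q + i)) = S.f (A + i) := by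
    intro i
    have h1 : A + q + i = a + q + ((A - a) + i) := by omega
    have h2 : A + i = a + ((A - a) + i) := by omega
    rw [h1, h2]
    exact hrel _
  have hrelA' : ∀ i, g (S'.f (A' + q' + i)) = S'.f (A' + i) := by
    intro i
    have h1 : A' + q' + i = a' + q' + ((A' - a') + i) := by omega
    have h2 : A' + i = a' + ((A' - a') + i) := by omega
    rw [h1, h2]
    exact hrel' _
  obtain ⟨P0⟩ := hT.isConnected (S.f A) (S'.f A')
  set P : G.Walk (S.f A) (S'.f A') := ↑P0.toPath with hP
  have hPp : P.IsPath := (P0.toPath).isPath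
  have main : ∀ k, A + k * q ≤ G.dist (S.f 0) z + P.length := by
    intro k
    obtain ⟨Q0⟩ := hT.isConnected (S.f (A + k * q)) (S'.f (A' + k * q'))
    set Q : G.Walk (S.f (A + k * q)) (S'.f (A' + k * q')) := ↑Q0.toPath with hQ
    have hQp : Q.IsPath := (Q0.toPath).isPath
    have he1 : g^[k] (S.f (A + k * q)) = S.f A := backward_iter hrelA k
    have he2 : g^[k] (S'.f (A' + k * q')) = S'.f A' := backward_iter hrelA' k
    set MQ : G.Walk (S.f A) (S'.f A') := (mapW (iterate_emb hg k) Q).copy he1 he2 with hMQ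
    have hMQp : MQ.IsPath := by
      rw [hMQ, Walk.isPath_copy]
      exact mapW_isPath _ hQp
    have hlen : Q.length = P.length := by
      have h1 : MQ = P := path_unique hT hMQp hPp
      have h2 : MQ.length = Q.length := by
        rw [hMQ, Walk.length_copy, mapW_length]
      rw [← h2, h1]
    have hzQ : z ∈ Q.support := hsep (A + k * q) (A' + k * q') (by omega) (by omega) Q
    have hd1 : G.dist (S.f (A + k * q)) z ≤ P.length := by
      have h3 := dist_le (Q.takeUntil z hzQ)
      have h4 := Q.length_takeUntil_le hzQ
      omega
    have hd2 : G.dist (S.f 0) (S.f (A + k * q)) = A + k * q := by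
      simpa using ray_dist hT S (Nat.zero_le (A + k * q))
    have htri := hT.isConnected.dist_triangle (u := S.f 0) (v := z) (w := S.f (A + k * q))
    have hcomm : G.dist z (S.f (A + k * q)) = G.dist (S.f (A + k * q)) z := dist_comm
    omega
  have hbig := main (G.dist (S.f 0) z + P.length + 1)
  have : G.dist (S.f 0) z + P.length + 1 ≤ (G.dist (S.f 0) z + P.length + 1) * q :=
    Nat.le_mul_of_pos_right _ hq
  omega

/-- the direction end lies in the limit set -/
lemma dir_in_limit (hT : G.IsTree) {M : Set (V → V)} (hM : IsEmbMonoid G M)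
    (hgM : g ∈ M) (hg : IsEmb G g) (v0 : V) (D : GRay G) (n : ℕ) (hn : 0 < n)
    (hshift : ∀ i, g (D.f i) = D.f (i + n)) : InLimitSet G M v0 D := by
  intro x
  obtain ⟨K, hK⟩ := orbit_converges hT hg D n hn hshift v0 x
  exact ⟨g^[K], iterate_mem hM hgM K, hK K le_rfl⟩

/-- the limit set is invariant under elements of the monoid -/
lemma limit_map (hT : G.IsTree) {M : Set (V → V)} (hM : IsEmbMonoid G M)
    (hgM : g ∈ M) (hg : IsEmb G g) {v0 : V} {R : GRay G} (hR : InLimitSet G M v0 R) :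
    InLimitSet G M v0 (gRay hg R) := by
  intro x
  by_cases hx : ∃ u, g u = x
  · obtain ⟨u, rfl⟩ := hx
    obtain ⟨h, hhM, m, hmt, p, hp⟩ := hR u
    refine ⟨g ∘ h, hM.2.2 g hgM h hhM, m, fun i hi he => hmt i hi (hg.1 he), mapW hg p, ?_⟩
    show _ ∉ (mapW hg p).support
    rw [mapW_support hg]
    intro hmem
    obtain ⟨y, hy, hy'⟩ := List.mem_map.mp hmem
    exact hp (hg.1 hy' ▸ hy)
  · push_neg at hx
    obtain ⟨P⟩ := hT.isConnected v0 (R.f 0)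
    refine ⟨g, hgM, 0, fun i _ he => hx _ he, mapW hg P, ?_⟩
    show _ ∉ (mapW hg P).support
    rw [mapW_support hg]
    intro hmem
    obtain ⟨y, _, hy'⟩ := List.mem_map.mp hmem
    exact hx y hy'

end AuxLemmas

theorem stmt16 (G : SimpleGraph V) (hT : G.IsTree) (M : Set (V → V))
    (hM : IsEmbMonoid G M) (v0 : V)
    (h2 : ∃ R1 R2 : GRay G, InLimitSet G M v0 R1 ∧ InLimitSet G M v0 R2 ∧ ¬ RayEquiv G R1 R2 ∧
      ∀ R : GRay G, InLimitSet G M v0 R → RayEquiv G R R1 ∨ RayEquiv G R R2) :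
    ∀ g ∈ M, ¬ Elliptic G g → Hyperbolic G g := by
  obtain ⟨R1, R2, hL1, hL2, h12, hdich⟩ := h2
  intro g hgM hnell
  have hg : IsEmb G g := hM.1 g hgM
  obtain ⟨D, n, hn, hshift⟩ := exists_direction hT hg hnell
  have hDL : InLimitSet G M v0 D := dir_in_limit hT hM hgM hg v0 D n hn hshift
  have hgD : RayEquiv G (gRay hg D) D := by
    refine rayEquiv_of_tail (a := 0) (b := n) ?_
    intro i
    show g (D.f (0 + i)) = D.f (n + i)
    rw [Nat.zero_add, hshift i, Nat.add_comm]
  have core : ∀ (Ra Rb : GRay G), InLimitSet G M v0 Ra → InLimitSet G M v0 Rb →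
      ¬ RayEquiv G Ra Rb →
      (∀ R : GRay G, InLimitSet G M v0 R → RayEquiv G R Ra ∨ RayEquiv G R Rb) →
      RayEquiv G D Ra → Hyperbolic G g := by
    intro Ra Rb hLa hLb hab hdi hDa
    have hga : RayEquiv G (gRay hg Ra) Ra := by
      have h1 : RayEquiv G (gRay hg Ra) (gRay hg D) := map_rayEquiv hT hg (rayEquiv_symm hDa)
      exact rayEquiv_trans h1 (rayEquiv_trans hgD hDa)
    have hgbL : InLimitSet G M v0 (gRay hg Rb) := limit_map hT hM hgM hg hLb
    rcases hdi (gRay hg Rb) hgbL with hb | hb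
    · exfalso
      have h1 : RayEquiv G (gRay hg Rb) (gRay hg Ra) := rayEquiv_trans hb (rayEquiv_symm hga)
      exact hab (rayEquiv_symm (rayEquiv_of_map hT hg h1))
    · refine ⟨hnell, Ra, Rb, hab, ⟨gRay hg Ra, fun _ => rfl, hga⟩,
        ⟨gRay hg Rb, fun _ => rfl, hb⟩, ?_⟩
      intro S hS
      obtain ⟨S2, hS2f, hS2e⟩ := hS
      have hgSe : RayEquiv G (gRay hg S) S :=
        rayEquiv_congr (funext hS2f : S2.f = (gRay hg S).f) rfl hS2e
      by_contra hcon
      push_neg at hcon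
      obtain ⟨hna, hnb⟩ := hcon
      have hSD : ¬ RayEquiv G S D := fun h => hna (rayEquiv_trans h hDa)
      have hbD : ¬ RayEquiv G Rb D := fun h =>
        hab (rayEquiv_symm (rayEquiv_trans h hDa))
      exact hnb (backward_unique hT hg hnell D n hn hshift hgSe hb hSD hbD)
  rcases hdich D hDL with h | h
  · exact core R1 R2 hL1 hL2 h12 hdich h
  · refine core R2 R1 hL2 hL1 (fun hc => h12 (rayEquiv_symm hc)) ?_ h
    intro R hR
    exact (hdich R hR).symm
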